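/- For all integers d ≥ 1 and k ≥ 2, and all sufficiently large n, there exists a linear nearly-d-regular k-uniform hypergraph on n vertices, i.e., one in which additionally every two distinct edges intersect in at most one vertex. -/

import Mathlib

/-- The degree of a vertex in a hypergraph: the number of edges containing it. -/
def hyperDeg {V : Type*} [DecidableEq V] (H : Finset (Finset V)) (v : V) : ℕ :=
  (H.filter (fun e => v ∈ e)).card

namespace NearlyReg



/-- grid block with slope `c`, offset `j`: one vertex per "row" `i < k`. -/
def Bset (m k c j : ℕ) : Finset ℕ :=
  (Finset.range k).image (fun i => i * m + (j + c * i) % m)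

/-- broken block: one extra vertex plus a column at x-coordinate `q`, rows `1..k-1`. -/
def Fset (m k r q : ℕ) : Finset ℕ :=
  insert (k * m + q % r) ((Finset.Ico 1 k).image (fun i => i * m + q))

/-- repair block inside row `0`. -/
def Cset (k l : ℕ) : Finset ℕ :=
  (Finset.range k).image (fun i => l * k + i)

def edg (m k r d : ℕ) (p : ℕ × ℕ) : Finset ℕ :=
  if p.1 < d then Bset m k p.1 p.2
  else if p.1 = d then Fset m k r p.2 else Cset k p.2

def Index (m k r d : ℕ) : Finset (ℕ × ℕ) :=
  ((Finset.range d ×ˢ Finset.range m).filter (fun p => 0 < p.1 ∨ r * d ≤ p.2))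
    ∪ ({d} ×ˢ Finset.range (r * d))
    ∪ ({d + 1} ×ˢ Finset.range (r * d / k))

lemma mem_Index {m k r d : ℕ} {p : ℕ × ℕ} :
    p ∈ Index m k r d ↔
      (p.1 < d ∧ p.2 < m ∧ (0 < p.1 ∨ r * d ≤ p.2)) ∨
      (p.1 = d ∧ p.2 < r * d) ∨ (p.1 = d + 1 ∧ p.2 < r * d / k) := by
  simp only [Index, Finset.mem_union, Finset.mem_filter, Finset.mem_product,
    Finset.mem_range, Finset.mem_singleton]
  tauto

lemma edg_B {m k r d t a : ℕ} (h : t < d) : edg m k r d (t, a) = Bset m k t a := if_pos h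

lemma edg_F {m k r d a : ℕ} : edg m k r d (d, a) = Fset m k r a := by
  rw [edg, if_neg (by omega), if_pos rfl]

lemma edg_C {m k r d a : ℕ} : edg m k r d (d + 1, a) = Cset k a := by
  rw [edg, if_neg (by omega), if_neg (by omega)]

lemma grid_eq {m i x i' x' : ℕ} (hx : x < m) (hx' : x' < m)
    (h : i * m + x = i' * m + x') : i = i' ∧ x = x' := by
  have key : ∀ a b u : ℕ, u < m → a < b → ∀ v : ℕ, a * m + u < b * m + v := by
    intro a b u hu hab v
    calc a * m + u < a * m + m := by omega
    _ = (a + 1) * m := by ring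
    _ ≤ b * m := Nat.mul_le_mul_right m hab
    _ ≤ b * m + v := Nat.le_add_right _ _
  rcases Nat.lt_trichotomy i i' with hlt | he | hgt
  · exact absurd h (Nat.ne_of_lt (key _ _ _ hx hlt _))
  · subst he; omega
  · exact absurd h.symm (Nat.ne_of_lt (key _ _ _ hx' hgt _))

lemma div_grid {m i a : ℕ} (hm : 0 < m) (ha : a < m) :
    (i * m + a) / m = i ∧ (i * m + a) % m = a := by
  constructor
  · rw [Nat.add_comm, Nat.add_mul_div_right _ _ hm, Nat.div_eq_of_lt ha, Nat.zero_add]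
  · rw [Nat.add_comm, Nat.add_mul_mod_self_right, Nat.mod_eq_of_lt ha]

lemma mem_Bset {m k c j w : ℕ} :
    w ∈ Bset m k c j ↔ ∃ i, i < k ∧ w = i * m + (j + c * i) % m := by
  simp [Bset, eq_comm]

lemma Bset_lt {m k c j w : ℕ} (hm : 0 < m) (hw : w ∈ Bset m k c j) : w < k * m := by
  rw [mem_Bset] at hw
  obtain ⟨i, hik, rfl⟩ := hw
  have h1 : (j + c * i) % m < m := Nat.mod_lt _ hm
  calc i * m + (j + c * i) % m < i * m + m := by omega
  _ = (i + 1) * m := by ring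
  _ ≤ k * m := Nat.mul_le_mul_right m (by omega)

lemma mem_Bset_iff {m k c j w : ℕ} (hm : 0 < m) (hw : w < k * m) :
    w ∈ Bset m k c j ↔ (j + c * (w / m)) % m = w % m := by
  constructor
  · intro h
    rw [mem_Bset] at h
    obtain ⟨i, hik, rfl⟩ := h
    have h1 : (j + c * i) % m < m := Nat.mod_lt _ hm
    obtain ⟨hd2, hm2⟩ := div_grid (i := i) hm h1
    rw [hd2, hm2]
  · intro h
    have hi : w / m < k := (Nat.div_lt_iff_lt_mul hm).2 hw
    rw [mem_Bset]
    refine ⟨w / m, hi, ?_⟩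
    rw [h]
    exact (Nat.div_add_mod' w m).symm

lemma mem_Fset_iff_grid {m k r q w : ℕ} (hm : 0 < m) (hq : q < m) (hw : w < k * m) :
    w ∈ Fset m k r q ↔ (1 ≤ w / m ∧ w % m = q) := by
  simp only [Fset, Finset.mem_insert, Finset.mem_image, Finset.mem_Ico]
  constructor
  · rintro (h | ⟨i, ⟨hi1, hik⟩, rfl⟩)
    · have : k * m ≤ w := by omega
      omega
    · obtain ⟨hd2, hm2⟩ := div_grid (i := i) hm hq
      exact ⟨by omega, hm2⟩
  · rintro ⟨h1, h3⟩
    right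
    have hik : w / m < k := (Nat.div_lt_iff_lt_mul hm).2 hw
    exact ⟨w / m, ⟨h1, hik⟩, by rw [← h3]; exact Nat.div_add_mod' w m⟩

lemma mem_Fset_extra {m k r q w : ℕ} (hm : 0 < m) (hq : q < m) (hw : k * m ≤ w) :
    w ∈ Fset m k r q ↔ w = k * m + q % r := by
  simp only [Fset, Finset.mem_insert, Finset.mem_image, Finset.mem_Ico]
  constructor
  · rintro (h | ⟨i, ⟨hi1, hik⟩, rfl⟩)
    · exact h
    · exfalso
      have : i * m + q < k * m := by
        calc i * m + q < i * m + m := by omega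
        _ = (i + 1) * m := by ring
        _ ≤ k * m := Nat.mul_le_mul_right m (by omega)
      omega
  · intro h; left; exact h

lemma Fset_lt {m k r q w : ℕ} (hm : 0 < m) (hq : q < m) (hr : 0 < r)
    (hw : w ∈ Fset m k r q) : w < k * m + r := by
  simp only [Fset, Finset.mem_insert, Finset.mem_image, Finset.mem_Ico] at hw
  rcases hw with h | ⟨i, ⟨hi1, hik⟩, rfl⟩
  · have := Nat.mod_lt q hr
    omega
  · have : i * m + q < k * m := by
      calc i * m + q < i * m + m := by omega
      _ = (i + 1) * m := by ring
      _ ≤ k * m := Nat.mul_le_mul_right m (by omega)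
    omega

lemma mem_Cset_iff {k l w : ℕ} (hk : 0 < k) :
    w ∈ Cset k l ↔ w / k = l := by
  simp only [Cset, Finset.mem_image, Finset.mem_range]
  constructor
  · rintro ⟨i, hik, rfl⟩; exact (div_grid hk hik).1
  · intro h
    exact ⟨w % k, Nat.mod_lt _ hk, by rw [← h]; exact Nat.div_add_mod' w k⟩

lemma Cset_lt {k l w : ℕ} (hw : w ∈ Cset k l) : w < (l + 1) * k := by
  simp only [Cset, Finset.mem_image, Finset.mem_range] at hw
  obtain ⟨i, hik, rfl⟩ := hw
  calc l * k + i < l * k + k := by omega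
  _ = (l + 1) * k := by ring



lemma mod_cancel {m a b : ℕ} (ha : a < m) (hb : b < m) (h : a % m = b % m) : a = b := by
  rwa [Nat.mod_eq_of_lt ha, Nat.mod_eq_of_lt hb] at h

lemma hQm_lem {m k r d : ℕ} (hbig : d * k + d * k < m) (hr : r < k) (hd : 1 ≤ d) :
    r * d + k ≤ m := by
  have h1 : r * d ≤ k * d := Nat.mul_le_mul_right d (by omega)
  have h2 : k * d = d * k := Nat.mul_comm _ _
  have h3 : 1 * k ≤ d * k := Nat.mul_le_mul_right k hd
  omega

lemma keyBB {m k d c j c' j' : ℕ} (hm : 0 < m) (hbig : d * k + d * k < m)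
    (hc : c < d) (hc' : c' < d) (hj : j < m) (hj' : j' < m)
    (hne : ¬(c = c' ∧ j = j'))
    {w w' : ℕ} (h1 : w ∈ Bset m k c j) (h2 : w ∈ Bset m k c' j')
    (h3 : w' ∈ Bset m k c j) (h4 : w' ∈ Bset m k c' j') : w = w' := by
  rw [mem_Bset] at h1 h2 h3 h4
  obtain ⟨i1, hi1, e1⟩ := h1
  obtain ⟨i1', hi1', e2⟩ := h2
  obtain ⟨i2, hi2, e3⟩ := h3
  obtain ⟨i2', hi2', e4⟩ := h4
  obtain ⟨hii, hxx⟩ := grid_eq (Nat.mod_lt _ hm) (Nat.mod_lt _ hm) (e1.symm.trans e2)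
  obtain ⟨hjj, hyy⟩ := grid_eq (Nat.mod_lt _ hm) (Nat.mod_lt _ hm) (e3.symm.trans e4)
  subst hii
  subst hjj
  by_cases hi12 : i1 = i2
  · subst hi12; rw [e1, e3]
  · exfalso
    have A1 : Nat.ModEq m (j + c * i1) (j' + c' * i1) := hxx
    have A2 : Nat.ModEq m (j + c * i2) (j' + c' * i2) := hyy
    rcases eq_or_ne c c' with hcc | hcc
    · subst hcc
      have : Nat.ModEq m (j + c * i1) (j' + c * i1) := A1
      have hj12 : Nat.ModEq m j j' := Nat.ModEq.add_right_cancel' (c * i1) this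
      exact hne ⟨rfl, mod_cancel hj hj' hj12⟩
    · have d1 : (m : ℤ) ∣ ((j' : ℤ) + c' * i1) - ((j : ℤ) + c * i1) := by
        have h := A1.dvd
        have he : ((j' : ℤ) + c' * i1) - ((j : ℤ) + c * i1)
            = ((j' + c' * i1 : ℕ) : ℤ) - ((j + c * i1 : ℕ) : ℤ) := by push_cast; ring
        rw [he]; exact h
      have d2 : (m : ℤ) ∣ ((j' : ℤ) + c' * i2) - ((j : ℤ) + c * i2) := by
        have h := A2.dvd
        have he : ((j' : ℤ) + c' * i2) - ((j : ℤ) + c * i2)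
            = ((j' + c' * i2 : ℕ) : ℤ) - ((j + c * i2 : ℕ) : ℤ) := by push_cast; ring
        rw [he]; exact h
      have d3 : (m : ℤ) ∣ (((c' : ℤ) - c) * ((i1 : ℤ) - i2)) := by
        have := dvd_sub d1 d2
        convert this using 1
        · rfl
        · ring
      have hz : (((c' : ℤ) - c) * ((i1 : ℤ) - i2)) = 0 := by
        apply Int.eq_zero_of_abs_lt_dvd d3
        have hb1 : |((c' : ℤ) - c)| ≤ d := by rw [abs_le]; omega
        have hb2 : |((i1 : ℤ) - i2)| ≤ k := by rw [abs_le]; omega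
        calc |(((c' : ℤ) - c) * ((i1 : ℤ) - i2))| = |((c' : ℤ) - c)| * |((i1 : ℤ) - i2)| :=
              abs_mul _ _
        _ ≤ (d : ℤ) * k := mul_le_mul hb1 hb2 (abs_nonneg _) (by positivity)
        _ < m := by
            have : d * k < m := by omega
            exact_mod_cast this
      rcases mul_eq_zero.1 hz with h | h
      · apply hcc; omega
      · apply hi12; omega

lemma keyBF {m k r d c j q : ℕ} (hm : 0 < m) (hbig : d * k + d * k < m) (hr : r < k)
    (hd : 1 ≤ d) (hc : c < d) (hj : j < m) (hcj : 0 < c ∨ r * d ≤ j) (hq : q < r * d)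
    {w w' : ℕ} (h1 : w ∈ Bset m k c j) (h2 : w ∈ Fset m k r q)
    (h3 : w' ∈ Bset m k c j) (h4 : w' ∈ Fset m k r q) : w = w' := by
  have hQm : r * d + k ≤ m := hQm_lem hbig hr hd
  have hqm : q < m := by omega
  have hw : w < k * m := Bset_lt hm h1
  have hw' : w' < k * m := Bset_lt hm h3
  rw [mem_Fset_iff_grid hm hqm hw] at h2
  rw [mem_Fset_iff_grid hm hqm hw'] at h4
  rw [mem_Bset_iff hm hw] at h1
  rw [mem_Bset_iff hm hw'] at h3
  obtain ⟨hi1, hx1⟩ := h2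
  obtain ⟨hi2, hx2⟩ := h4
  rw [hx1] at h1
  rw [hx2] at h3
  -- h1 : (j + c * (w/m)) % m = q, h3 similarly for w'
  by_cases hc0 : 0 < c
  · have hdiv : w / m < k := (Nat.div_lt_iff_lt_mul hm).2 hw
    have hdiv' : w' / m < k := (Nat.div_lt_iff_lt_mul hm).2 hw'
    have hmod : Nat.ModEq m (j + c * (w / m)) (j + c * (w' / m)) := by
      unfold Nat.ModEq; rw [h1, h3]
    have hcan : Nat.ModEq m (c * (w / m)) (c * (w' / m)) := Nat.ModEq.add_left_cancel' j hmod
    have hb1 : c * (w / m) ≤ d * k := Nat.mul_le_mul (by omega) (by omega)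
    have hb2 : c * (w' / m) ≤ d * k := Nat.mul_le_mul (by omega) (by omega)
    have heq : c * (w / m) = c * (w' / m) := mod_cancel (by omega) (by omega) hcan
    have hdd : w / m = w' / m := Nat.eq_of_mul_eq_mul_left hc0 heq
    have e1 := Nat.div_add_mod w m
    have e2 := Nat.div_add_mod w' m
    rw [hdd] at e1
    omega
  · have hc0' : c = 0 := by omega
    have hjge : r * d ≤ j := by rcases hcj with h | h; omega; exact h
    subst hc0'
    rw [Nat.zero_mul, Nat.add_zero, Nat.mod_eq_of_lt hj] at h1
    omega

lemma keyBC {m k r d c j l : ℕ} (hm : 0 < m) (hbig : d * k + d * k < m) (hr : r < k)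
    (hd : 1 ≤ d) (hk : 0 < k) (hc : c < d) (hj : j < m) (hl : l < r * d / k)
    {w w' : ℕ} (h1 : w ∈ Bset m k c j) (h2 : w ∈ Cset k l)
    (h3 : w' ∈ Bset m k c j) (h4 : w' ∈ Cset k l) : w = w' := by
  have hQm : r * d + k ≤ m := hQm_lem hbig hr hd
  have hlk : (l + 1) * k ≤ r * d := by
    calc (l + 1) * k ≤ (r * d / k) * k := Nat.mul_le_mul_right k (by omega)
    _ ≤ r * d := Nat.div_mul_le_self _ _
  have hwm : w < m := by have := Cset_lt h2; omega
  have hwm' : w' < m := by have := Cset_lt h4; omega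
  rw [mem_Bset] at h1 h3
  obtain ⟨i1, hi1, e1⟩ := h1
  obtain ⟨i2, hi2, e3⟩ := h3
  have hi10 : i1 = 0 := by
    by_contra hne
    have : m ≤ i1 * m := Nat.le_mul_of_pos_left m (by omega)
    omega
  have hi20 : i2 = 0 := by
    by_contra hne
    have : m ≤ i2 * m := Nat.le_mul_of_pos_left m (by omega)
    omega
  subst hi10; subst hi20
  simp only [Nat.zero_mul, Nat.mul_zero, Nat.add_zero, Nat.zero_add] at e1 e3
  rw [e1, e3]

lemma keyFF {m k r d q q' : ℕ} (hm : 0 < m) (hbig : d * k + d * k < m) (hr : r < k)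
    (hd : 1 ≤ d) (hq : q < r * d) (hq' : q' < r * d) (hne : q ≠ q')
    {w w' : ℕ} (h1 : w ∈ Fset m k r q) (h2 : w ∈ Fset m k r q')
    (h3 : w' ∈ Fset m k r q) (h4 : w' ∈ Fset m k r q') : w = w' := by
  have hQm : r * d + k ≤ m := hQm_lem hbig hr hd
  have hqm : q < m := by omega
  have hqm' : q' < m := by omega
  have extra : ∀ u : ℕ, u ∈ Fset m k r q → u ∈ Fset m k r q' → u = k * m + q % r := by
    intro u hu hu'
    by_cases hukm : u < k * m
    · exfalso
      rw [mem_Fset_iff_grid hm hqm hukm] at hu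
      rw [mem_Fset_iff_grid hm hqm' hukm] at hu'
      omega
    · exact (mem_Fset_extra hm hqm (by omega)).1 hu
  rw [extra w h1 h2, extra w' h3 h4]

lemma keyFC {m k r d q l : ℕ} (hm : 0 < m) (hbig : d * k + d * k < m) (hr : r < k)
    (hd : 1 ≤ d) (hk : 0 < k) (hq : q < r * d) (hl : l < r * d / k)
    {w : ℕ} (h1 : w ∈ Fset m k r q) (h2 : w ∈ Cset k l) : False := by
  have hQm : r * d + k ≤ m := hQm_lem hbig hr hd
  have hqm : q < m := by omega
  have hlk : (l + 1) * k ≤ r * d := by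
    calc (l + 1) * k ≤ (r * d / k) * k := Nat.mul_le_mul_right k (by omega)
    _ ≤ r * d := Nat.div_mul_le_self _ _
  have hwm : w < m := by have := Cset_lt h2; omega
  have hkm : m ≤ k * m := Nat.le_mul_of_pos_left m hk
  have hwkm : w < k * m := by omega
  rw [mem_Fset_iff_grid hm hqm hwkm] at h1
  have : 1 * m ≤ (w / m) * m := Nat.mul_le_mul_right m h1.1
  have hle : (w / m) * m ≤ w := by
    have := Nat.div_add_mod' w m
    omega
  omega

lemma keyCC {k l l' : ℕ} (hk : 0 < k) (hne : l ≠ l')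
    {w : ℕ} (h1 : w ∈ Cset k l) (h2 : w ∈ Cset k l') : False := by
  rw [mem_Cset_iff hk] at h1 h2
  omega


lemma key_master {m k r d : ℕ} (hm : 0 < m) (hbig : d * k + d * k < m) (hr : r < k)
    (hd : 1 ≤ d) (hk : 0 < k) :
    ∀ p ∈ Index m k r d, ∀ p' ∈ Index m k r d, p ≠ p' →
      ∀ w ∈ edg m k r d p ∩ edg m k r d p', ∀ w' ∈ edg m k r d p ∩ edg m k r d p', w = w' := by
  rintro ⟨t, a⟩ hp ⟨t', a'⟩ hp' hne w hw w' hw'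
  rw [Finset.mem_inter] at hw hw'
  obtain ⟨hw1, hw2⟩ := hw
  obtain ⟨hw1', hw2'⟩ := hw'
  rw [mem_Index] at hp hp'
  simp only at hp hp'
  rcases hp with ⟨ht, ha, hcj⟩ | ⟨ht, ha⟩ | ⟨ht, ha⟩ <;>
    rcases hp' with ⟨ht', ha', hcj'⟩ | ⟨ht', ha'⟩ | ⟨ht', ha'⟩
  · -- B B
    rw [edg_B ht] at hw1 hw1'
    rw [edg_B ht'] at hw2 hw2'
    refine keyBB hm hbig ht ht' ha ha' ?_ hw1 hw2 hw1' hw2'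
    rintro ⟨rfl, rfl⟩
    exact hne rfl
  · -- B F
    subst ht'
    rw [edg_B ht] at hw1 hw1'
    rw [edg_F] at hw2 hw2'
    exact keyBF hm hbig hr hd ht ha hcj ha' hw1 hw2 hw1' hw2'
  · -- B C
    subst ht'
    rw [edg_B ht] at hw1 hw1'
    rw [edg_C] at hw2 hw2'
    exact keyBC hm hbig hr hd hk ht ha ha' hw1 hw2 hw1' hw2'
  · -- F B
    subst ht
    rw [edg_F] at hw1 hw1'
    rw [edg_B ht'] at hw2 hw2'
    exact keyBF hm hbig hr hd ht' ha' hcj' ha hw2 hw1 hw2' hw1'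
  · -- F F
    subst ht; subst ht'
    rw [edg_F] at hw1 hw1' hw2 hw2'
    refine keyFF hm hbig hr hd ha ha' ?_ hw1 hw2 hw1' hw2'
    rintro rfl
    exact hne rfl
  · -- F C
    subst ht; subst ht'
    rw [edg_F] at hw1
    rw [edg_C] at hw2
    exact (keyFC hm hbig hr hd hk ha ha' hw1 hw2).elim
  · -- C B
    subst ht
    rw [edg_C] at hw1 hw1'
    rw [edg_B ht'] at hw2 hw2'
    exact keyBC hm hbig hr hd hk ht' ha' ha hw2 hw1 hw2' hw1'
  · -- C F
    subst ht; subst ht'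
    rw [edg_C] at hw1
    rw [edg_F] at hw2
    exact (keyFC hm hbig hr hd hk ha' ha hw2 hw1).elim
  · -- C C
    subst ht; subst ht'
    rw [edg_C] at hw1 hw2
    refine (keyCC hk ?_ hw1 hw2).elim
    rintro rfl
    exact hne rfl

lemma inter_card_le_one {m k r d : ℕ} (hm : 0 < m) (hbig : d * k + d * k < m) (hr : r < k)
    (hd : 1 ≤ d) (hk : 0 < k) :
    ∀ p ∈ Index m k r d, ∀ p' ∈ Index m k r d, p ≠ p' →
      (edg m k r d p ∩ edg m k r d p').card ≤ 1 := by
  intro p hp p' hp' hne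
  rw [Finset.card_le_one]
  intro a ha b hb
  exact key_master hm hbig hr hd hk p hp p' hp' hne a ha b hb

lemma edg_card {m k r d : ℕ} (hm : 0 < m) (hbig : d * k + d * k < m) (hr : r < k)
    (hd : 1 ≤ d) (hk : 0 < k) :
    ∀ p ∈ Index m k r d, (edg m k r d p).card = k := by
  rintro ⟨t, a⟩ hp
  rw [mem_Index] at hp
  simp only at hp
  rcases hp with ⟨ht, ha, hcj⟩ | ⟨ht, ha⟩ | ⟨ht, ha⟩
  · rw [edg_B ht, Bset]
    rw [Finset.card_image_of_injOn, Finset.card_range]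
    intro i hi i' hi' hee
    exact (grid_eq (Nat.mod_lt _ hm) (Nat.mod_lt _ hm) hee).1
  · have hQm : r * d + k ≤ m := hQm_lem hbig hr hd
    have ham : a < m := by omega
    rw [ht, edg_F, Fset]
    rw [Finset.card_insert_of_notMem, Finset.card_image_of_injOn, Nat.card_Ico]
    · omega
    · intro i hi i' hi' hee
      exact (grid_eq ham ham hee).1
    · intro hmem
      rw [Finset.mem_image] at hmem
      obtain ⟨i, hi, hee⟩ := hmem
      rw [Finset.mem_Ico] at hi
      have : i * m + a < k * m := by
        calc i * m + a < i * m + m := by omega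
        _ = (i + 1) * m := by ring
        _ ≤ k * m := Nat.mul_le_mul_right m (by omega)
      omega
  · rw [ht, edg_C, Cset]
    rw [Finset.card_image_of_injOn, Finset.card_range]
    intro i hi i' hi' hee
    exact Nat.add_left_cancel hee

lemma edg_injOn {m k r d : ℕ} (hm : 0 < m) (hbig : d * k + d * k < m) (hr : r < k)
    (hd : 1 ≤ d) (hk : 2 ≤ k) :
    ∀ p ∈ Index m k r d, ∀ p' ∈ Index m k r d, edg m k r d p = edg m k r d p' → p = p' := by
  intro p hp p' hp' he
  by_contra hne
  have h1 := inter_card_le_one hm hbig hr hd (by omega) p hp p' hp' hne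
  rw [he, Finset.inter_self] at h1
  have h2 := edg_card hm hbig hr hd (by omega) p' hp'
  omega

lemma edg_bound {m k r d : ℕ} (hm : 0 < m) (hbig : d * k + d * k < m) (hr : r < k)
    (hd : 1 ≤ d) (hk : 0 < k) :
    ∀ p ∈ Index m k r d, ∀ w ∈ edg m k r d p, w < k * m + r := by
  rintro ⟨t, a⟩ hp w hw
  rw [mem_Index] at hp
  simp only at hp
  have hQm : r * d + k ≤ m := hQm_lem hbig hr hd
  rcases hp with ⟨ht, ha, hcj⟩ | ⟨ht, ha⟩ | ⟨ht, ha⟩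
  · rw [edg_B ht] at hw
    have := Bset_lt hm hw
    omega
  · subst ht
    rw [edg_F] at hw
    have hrpos : 0 < r := by
      by_contra h
      have : r = 0 := by omega
      subst this
      simp at ha
    exact Fset_lt hm (by omega) hrpos hw
  · subst ht
    rw [edg_C] at hw
    have h1 := Cset_lt hw
    have hlk : (a + 1) * k ≤ r * d := by
      calc (a + 1) * k ≤ (r * d / k) * k := Nat.mul_le_mul_right k (by omega)
      _ ≤ r * d := Nat.div_mul_le_self _ _
    have hkm : m ≤ k * m := Nat.le_mul_of_pos_left m hk
    omega
lemma jc_spec {m x s : ℕ} (hm : 0 < m) (hs : s ≤ m) (hx : x < m) :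
    ((x + (m - s)) % m + s) % m = x := by
  rw [Nat.mod_add_mod, show x + (m - s) + s = x + m by omega, Nat.add_mod_right]
  exact Nat.mod_eq_of_lt hx

lemma jc_unique {m x s a : ℕ} (hm : 0 < m) (hs : s ≤ m) (hx : x < m) (ha : a < m)
    (h : (a + s) % m = x) : a = (x + (m - s)) % m := by
  rw [← h, Nat.mod_add_mod, show a + s + (m - s) = a + m by omega, Nat.add_mod_right,
    Nat.mod_eq_of_lt ha]

lemma filt_extra {m k r d w : ℕ} (hm : 0 < m) (hbig : d * k + d * k < m) (hr : r < k)
    (hd : 1 ≤ d) (hk : 2 ≤ k) (hkm : k * m ≤ w) (hw : w < k * m + r) :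
    (Index m k r d).filter (fun p => w ∈ edg m k r d p)
      = (Finset.range d).image (fun t => ((d : ℕ), (w - k * m) + t * r)) := by
  have hQm : r * d + k ≤ m := hQm_lem hbig hr hd
  have hrpos : 0 < r := by omega
  ext ⟨t, a⟩
  simp only [Finset.mem_filter, mem_Index, Finset.mem_image, Finset.mem_range, Prod.mk.injEq]
  constructor
  · rintro ⟨⟨ht, ha, hcj⟩ | ⟨ht, ha⟩ | ⟨ht, ha⟩, hmem⟩
    · rw [edg_B ht] at hmem
      have := Bset_lt hm hmem
      omega
    · rw [ht, edg_F] at hmem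
      rw [mem_Fset_extra hm (by omega) hkm] at hmem
      refine ⟨a / r, ?_, ht.symm, ?_⟩
      · rw [Nat.div_lt_iff_lt_mul hrpos, Nat.mul_comm d r]
        omega
      · have h1 := Nat.div_add_mod' a r
        omega
    · rw [ht, edg_C] at hmem
      have h1 := Cset_lt hmem
      have hlk : (a + 1) * k ≤ r * d := by
        calc (a + 1) * k ≤ (r * d / k) * k := Nat.mul_le_mul_right k (by omega)
        _ ≤ r * d := Nat.div_mul_le_self _ _
      have hmkm : m ≤ k * m := Nat.le_mul_of_pos_left m (by omega)
      omega
  · rintro ⟨t', ht', rfl, rfl⟩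
    have h1 : t' * r + r ≤ d * r := by
      calc t' * r + r = (t' + 1) * r := by ring
      _ ≤ d * r := Nat.mul_le_mul_right r (by omega)
    have h2 : d * r = r * d := Nat.mul_comm _ _
    refine ⟨Or.inr (Or.inl ⟨rfl, by omega⟩), ?_⟩
    rw [edg_F, mem_Fset_extra hm (by omega) hkm, Nat.add_mul_mod_self_right,
      Nat.mod_eq_of_lt (by omega : w - k * m < r)]
    omega

lemma filt_high {m k r d w : ℕ} (hm : 0 < m) (hbig : d * k + d * k < m) (hr : r < k)
    (hd : 1 ≤ d) (hk : 2 ≤ k) (hwkm : w < k * m) (hx : r * d ≤ w % m) :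
    (Index m k r d).filter (fun p => w ∈ edg m k r d p)
      = (Finset.range d).image (fun c => (c, (w % m + (m - c * (w / m))) % m)) := by
  have hQm : r * d + k ≤ m := hQm_lem hbig hr hd
  have hxm : w % m < m := Nat.mod_lt _ hm
  have hik : w / m < k := (Nat.div_lt_iff_lt_mul hm).2 hwkm
  have hsle : ∀ c : ℕ, c < d → c * (w / m) ≤ m := by
    intro c hc
    have : c * (w / m) ≤ d * k := Nat.mul_le_mul (by omega) (by omega)
    omega
  ext ⟨t, a⟩
  simp only [Finset.mem_filter, mem_Index, Finset.mem_image, Finset.mem_range, Prod.mk.injEq]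
  constructor
  · rintro ⟨⟨ht, ha, hcj⟩ | ⟨ht, ha⟩ | ⟨ht, ha⟩, hmem⟩
    · rw [edg_B ht, mem_Bset_iff hm hwkm] at hmem
      exact ⟨t, ht, rfl, (jc_unique hm (hsle t ht) hxm ha hmem).symm⟩
    · rw [ht, edg_F, mem_Fset_iff_grid hm (by omega) hwkm] at hmem
      omega
    · rw [ht, edg_C] at hmem
      have h1 := Cset_lt hmem
      have hlk : (a + 1) * k ≤ r * d := by
        calc (a + 1) * k ≤ (r * d / k) * k := Nat.mul_le_mul_right k (by omega)
        _ ≤ r * d := Nat.div_mul_le_self _ _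
      have hwm : w < m := by omega
      rw [Nat.mod_eq_of_lt hwm] at hx
      omega
  · rintro ⟨c, hc, rfl, rfl⟩
    have hspec := jc_spec (x := w % m) (s := c * (w / m)) hm (hsle c hc) hxm
    constructor
    · refine Or.inl ⟨hc, Nat.mod_lt _ hm, ?_⟩
      rcases Nat.eq_zero_or_pos c with rfl | hcpos
      · right
        rw [Nat.zero_mul, Nat.sub_zero, Nat.add_mod_right, Nat.mod_eq_of_lt hxm]
        exact hx
      · exact Or.inl hcpos
    · rw [edg_B hc, mem_Bset_iff hm hwkm]
      exact hspec

lemma filt_mid {m k r d w : ℕ} (hm : 0 < m) (hbig : d * k + d * k < m) (hr : r < k)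
    (hd : 1 ≤ d) (hk : 2 ≤ k) (hwkm : w < k * m) (hx : w % m < r * d) (hi : m ≤ w) :
    (Index m k r d).filter (fun p => w ∈ edg m k r d p)
      = ((Finset.Ico 1 d).image (fun c => (c, (w % m + (m - c * (w / m))) % m)))
          ∪ {((d : ℕ), w % m)} := by
  have hQm : r * d + k ≤ m := hQm_lem hbig hr hd
  have hxm : w % m < m := Nat.mod_lt _ hm
  have hik : w / m < k := (Nat.div_lt_iff_lt_mul hm).2 hwkm
  have hipos : 1 ≤ w / m := by
    rw [Nat.le_div_iff_mul_le hm]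
    omega
  have hsle : ∀ c : ℕ, c < d → c * (w / m) ≤ m := by
    intro c hc
    have : c * (w / m) ≤ d * k := Nat.mul_le_mul (by omega) (by omega)
    omega
  ext ⟨t, a⟩
  simp only [Finset.mem_filter, mem_Index, Finset.mem_image, Finset.mem_union,
    Finset.mem_singleton, Finset.mem_Ico, Prod.mk.injEq]
  constructor
  · rintro ⟨⟨ht, ha, hcj⟩ | ⟨ht, ha⟩ | ⟨ht, ha⟩, hmem⟩
    · rw [edg_B ht, mem_Bset_iff hm hwkm] at hmem
      left
      refine ⟨t, ⟨?_, ht⟩, rfl, (jc_unique hm (hsle t ht) hxm ha hmem).symm⟩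
      by_contra htz
      have ht0 : t = 0 := by omega
      subst ht0
      rw [Nat.zero_mul, Nat.add_zero, Nat.mod_eq_of_lt ha] at hmem
      rcases hcj with h | h
      · omega
      · omega
    · rw [ht, edg_F, mem_Fset_iff_grid hm (by omega) hwkm] at hmem
      right
      exact ⟨ht, hmem.2.symm⟩
    · rw [ht, edg_C] at hmem
      have h1 := Cset_lt hmem
      have hlk : (a + 1) * k ≤ r * d := by
        calc (a + 1) * k ≤ (r * d / k) * k := Nat.mul_le_mul_right k (by omega)
        _ ≤ r * d := Nat.div_mul_le_self _ _
      omega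
  · rintro (⟨c, ⟨hc1, hc⟩, rfl, rfl⟩ | ⟨rfl, rfl⟩)
    · refine ⟨Or.inl ⟨hc, Nat.mod_lt _ hm, Or.inl hc1⟩, ?_⟩
      rw [edg_B hc, mem_Bset_iff hm hwkm]
      exact jc_spec hm (hsle c hc) hxm
    · refine ⟨Or.inr (Or.inl ⟨rfl, hx⟩), ?_⟩
      rw [edg_F, mem_Fset_iff_grid hm (by omega) hwkm]
      exact ⟨hipos, rfl⟩

lemma filt_low {m k r d w : ℕ} (hm : 0 < m) (hbig : d * k + d * k < m) (hr : r < k)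
    (hd : 1 ≤ d) (hk : 2 ≤ k) (hwm : w < m) (hx : w < r * d) :
    (Index m k r d).filter (fun p => w ∈ edg m k r d p)
      = ((Finset.Ico 1 d).image (fun c => (c, w)))
          ∪ (if w < r * d / k * k then {((d + 1 : ℕ), w / k)} else ∅) := by
  have hQm : r * d + k ≤ m := hQm_lem hbig hr hd
  have hkpos : 0 < k := by omega
  have hwkm : w < k * m := by
    have : m ≤ k * m := Nat.le_mul_of_pos_left m hkpos
    omega
  have hi0 : w / m = 0 := Nat.div_eq_of_lt hwm
  have hx0 : w % m = w := Nat.mod_eq_of_lt hwm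
  ext ⟨t, a⟩
  simp only [Finset.mem_filter, mem_Index, Finset.mem_image, Finset.mem_union,
    Finset.mem_singleton, Finset.mem_Ico, Prod.mk.injEq]
  constructor
  · rintro ⟨⟨ht, ha, hcj⟩ | ⟨ht, ha⟩ | ⟨ht, ha⟩, hmem⟩
    · rw [edg_B ht, mem_Bset_iff hm hwkm] at hmem
      rw [hi0, Nat.mul_zero, Nat.add_zero, hx0, Nat.mod_eq_of_lt ha] at hmem
      subst hmem
      left
      refine ⟨t, ⟨?_, ht⟩, rfl, rfl⟩
      rcases hcj with h | h
      · omega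
      · omega
    · rw [ht, edg_F, mem_Fset_iff_grid hm (by omega) hwkm] at hmem
      omega
    · rw [ht, edg_C, mem_Cset_iff hkpos] at hmem
      right
      have hwlt : w < r * d / k * k := by
        have h1 := Cset_lt (w := w) (k := k) (l := a)
        have : w < (a + 1) * k := by
          rw [mem_Cset_iff hkpos] at *
          have := Nat.div_add_mod' w k
          have hk2 := Nat.mod_lt w hkpos
          calc w = w / k * k + w % k := (Nat.div_add_mod' w k).symm
          _ < w / k * k + k := by omega
          _ = (w / k + 1) * k := by ring
          _ = (a + 1) * k := by rw [hmem]
        calc w < (a + 1) * k := this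
        _ ≤ (r * d / k) * k := Nat.mul_le_mul_right k (by omega)
      rw [if_pos hwlt]
      simp only [Finset.mem_singleton, Prod.mk.injEq]
      exact ⟨ht, hmem.symm⟩
  · rintro (⟨c, ⟨hc1, hc⟩, rfl, rfl⟩ | hmem)
    · refine ⟨Or.inl ⟨hc, by omega, Or.inl hc1⟩, ?_⟩
      rw [edg_B hc, mem_Bset_iff hm hwkm, hi0, Nat.mul_zero, Nat.add_zero, hx0]
    · by_cases hwlt : w < r * d / k * k
      · rw [if_pos hwlt] at hmem
        simp only [Finset.mem_singleton, Prod.mk.injEq] at hmem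
        obtain ⟨rfl, rfl⟩ := hmem
        have hdl : w / k < r * d / k := by
          rw [Nat.div_lt_iff_lt_mul hkpos]
          exact hwlt
        refine ⟨Or.inr (Or.inr ⟨rfl, hdl⟩), ?_⟩
        rw [edg_C, mem_Cset_iff hkpos]
      · rw [if_neg hwlt] at hmem
        simp at hmem
lemma deg_count {m k r d w : ℕ} (hm : 0 < m) (hbig : d * k + d * k < m) (hr : r < k)
    (hd : 1 ≤ d) (hk : 2 ≤ k) (hw : w < k * m + r) :
    ((Index m k r d).filter (fun p => w ∈ edg m k r d p)).card
      = if r * d / k * k ≤ w ∧ w < r * d then d - 1 else d := by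
  have hQm : r * d + k ≤ m := hQm_lem hbig hr hd
  have hmkm : m ≤ k * m := Nat.le_mul_of_pos_left m (by omega)
  by_cases hkm : k * m ≤ w
  · rw [filt_extra hm hbig hr hd hk hkm hw, if_neg (by omega)]
    rw [Finset.card_image_of_injOn, Finset.card_range]
    intro t ht t' ht' he
    simp only [Prod.mk.injEq] at he
    have hrpos : 0 < r := by omega
    have h2 : t * r = t' * r := by omega
    exact Nat.eq_of_mul_eq_mul_right hrpos h2
  · push_neg at hkm
    by_cases hx : r * d ≤ w % m
    · rw [filt_high hm hbig hr hd hk hkm hx, if_neg ?hc]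
      case hc =>
        rintro ⟨h1, h2⟩
        rw [Nat.mod_eq_of_lt (by omega)] at hx
        omega
      rw [Finset.card_image_of_injOn, Finset.card_range]
      intro t ht t' ht' he
      simp only [Prod.mk.injEq] at he
      exact he.1
    · push_neg at hx
      by_cases hi : m ≤ w
      · rw [filt_mid hm hbig hr hd hk hkm hx hi, if_neg (by omega)]
        have hdisj : Disjoint ((Finset.Ico 1 d).image
            (fun c => (c, (w % m + (m - c * (w / m))) % m))) {((d : ℕ), w % m)} := by
          rw [Finset.disjoint_singleton_right]
          simp only [Finset.mem_image, Finset.mem_Ico, Prod.mk.injEq, not_exists]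
          rintro c ⟨⟨h1, h2⟩, h3, h4⟩
          omega
        have hinj : Set.InjOn (fun c => ((c : ℕ), (w % m + (m - c * (w / m))) % m))
            (Finset.Ico 1 d) := by
          intro a ha b hb h
          simpa using congrArg Prod.fst h
        rw [Finset.card_union_of_disjoint hdisj, Finset.card_image_of_injOn hinj,
          Finset.card_singleton, Nat.card_Ico]
        omega
      · push_neg at hi
        have hx' : w < r * d := by rwa [Nat.mod_eq_of_lt hi] at hx
        have hinj : Set.InjOn (fun c => ((c : ℕ), w)) (Finset.Ico 1 d) := by
          intro a ha b hb h
          simpa using congrArg Prod.fst h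
        by_cases hcov : w < r * d / k * k
        · rw [filt_low hm hbig hr hd hk hi hx', if_pos hcov, if_neg (by omega)]
          have hdisj : Disjoint ((Finset.Ico 1 d).image (fun c => ((c : ℕ), w)))
              {((d + 1 : ℕ), w / k)} := by
            rw [Finset.disjoint_singleton_right]
            simp only [Finset.mem_image, Finset.mem_Ico, Prod.mk.injEq, not_exists]
            rintro c ⟨⟨h1, h2⟩, h3, h4⟩
            omega
          rw [Finset.card_union_of_disjoint hdisj, Finset.card_image_of_injOn hinj,
            Finset.card_singleton, Nat.card_Ico]
          omega
        · rw [filt_low hm hbig hr hd hk hi hx', if_neg hcov, if_pos ⟨by omega, hx'⟩]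
          rw [Finset.union_empty, Finset.card_image_of_injOn hinj, Nat.card_Ico]

def toFinE (n : ℕ) (e : Finset ℕ) : Finset (Fin n) :=
  (e.filter (· < n)).attachFin (fun _ h => (Finset.mem_filter.1 h).2)

lemma mem_toFinE {n : ℕ} {e : Finset ℕ} {v : Fin n} : v ∈ toFinE n e ↔ (v : ℕ) ∈ e := by
  simp [toFinE, Finset.mem_attachFin, v.isLt]

lemma card_toFinE {n : ℕ} {e : Finset ℕ} (h : ∀ w ∈ e, w < n) : (toFinE n e).card = e.card := by
  rw [toFinE, Finset.card_attachFin, Finset.filter_true_of_mem h]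

lemma toFinE_inj {n : ℕ} {e f : Finset ℕ} (he : ∀ w ∈ e, w < n) (hf : ∀ w ∈ f, w < n)
    (h : toFinE n e = toFinE n f) : e = f := by
  ext w
  constructor
  · intro hw
    have hwn : w < n := he w hw
    have h2 : (⟨w, hwn⟩ : Fin n) ∈ toFinE n e := mem_toFinE.2 hw
    rw [h] at h2
    exact mem_toFinE.1 h2
  · intro hw
    have hwn : w < n := hf w hw
    have h2 : (⟨w, hwn⟩ : Fin n) ∈ toFinE n f := mem_toFinE.2 hw
    rw [← h] at h2
    exact mem_toFinE.1 h2

lemma toFinE_inter {n : ℕ} (e f : Finset ℕ) :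
    toFinE n (e ∩ f) = toFinE n e ∩ toFinE n f := by
  ext v
  simp [mem_toFinE, Finset.mem_inter]

lemma card_toFinE_le {n : ℕ} (e : Finset ℕ) : (toFinE n e).card ≤ e.card := by
  rw [toFinE, Finset.card_attachFin]
  exact Finset.card_filter_le _ _
end NearlyReg

open NearlyReg in
/-- For all `d ≥ 1`, `k ≥ 2` and all sufficiently large `n`, there exists a
linear nearly-`d`-regular `k`-uniform hypergraph on `n` vertices: every vertex
has degree `d` or `d - 1`, fewer than `k` vertices have degree `d - 1`, and any
two distinct edges intersect in at most one vertex. -/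
theorem exists_linear_nearly_regular_uniform_hypergraph (d k : ℕ) (hd : 1 ≤ d) (hk : 2 ≤ k) :
    ∃ N : ℕ, ∀ n : ℕ, N ≤ n → ∃ H : Finset (Finset (Fin n)),
      (∀ e ∈ H, e.card = k) ∧
      (∀ v : Fin n, hyperDeg H v = d ∨ hyperDeg H v = d - 1) ∧
      (Finset.univ.filter (fun v : Fin n => hyperDeg H v = d - 1)).card < k ∧
      (∀ e ∈ H, ∀ f ∈ H, e ≠ f → (e ∩ f).card ≤ 1) := by
  refine ⟨(2 * (d * k) + 2) * k + k, ?_⟩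
  intro n hn
  have hk0 : 0 < k := by omega
  have hnm := Nat.div_add_mod n k
  set m := n / k with hmdef
  set r := n % k with hrdef
  have hr : r < k := Nat.mod_lt _ hk0
  have hmge : 2 * (d * k) + 2 ≤ m := by
    rw [hmdef, Nat.le_div_iff_mul_le hk0]
    calc (2 * (d * k) + 2) * k ≤ (2 * (d * k) + 2) * k + k := by omega
    _ ≤ n := hn
  have hbig : d * k + d * k < m := by omega
  have hm : 0 < m := by omega
  have hkm_n : k * m + r = n := hnm
  have hQm : r * d + k ≤ m := hQm_lem hbig hr hd
  have hmkm : m ≤ k * m := Nat.le_mul_of_pos_left m (by omega)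
  have hbnd : ∀ p ∈ Index m k r d, ∀ w ∈ edg m k r d p, w < n := by
    intro p hp w hw
    have := edg_bound hm hbig hr hd hk0 p hp w hw
    omega
  refine ⟨(Index m k r d).image (fun p => toFinE n (edg m k r d p)), ?_, ?_, ?_, ?_⟩
  case _ =>
    intro e he
    rw [Finset.mem_image] at he
    obtain ⟨p, hp, rfl⟩ := he
    rw [card_toFinE (hbnd p hp)]
    exact edg_card hm hbig hr hd hk0 p hp
  all_goals
    have hdeg : ∀ v : Fin n,
        hyperDeg ((Index m k r d).image (fun p => toFinE n (edg m k r d p))) v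
          = if r * d / k * k ≤ (v : ℕ) ∧ (v : ℕ) < r * d then d - 1 else d := by
      intro v
      have h1 : hyperDeg ((Index m k r d).image (fun p => toFinE n (edg m k r d p))) v
          = ((Index m k r d).filter (fun p => (v : ℕ) ∈ edg m k r d p)).card := by
        unfold hyperDeg
        rw [Finset.filter_image]
        rw [Finset.card_image_of_injOn ?inj]
        case inj =>
          intro p hp p' hp' he
          simp only [Finset.coe_filter, Set.mem_setOf_eq] at hp hp'
          exact edg_injOn hm hbig hr hd hk p hp.1 p' hp'.1
            (toFinE_inj (hbnd p hp.1) (hbnd p' hp'.1) he)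
        congr 1
        apply Finset.filter_congr
        intro p hp
        simp [mem_toFinE]
      rw [h1]
      have hvn : (v : ℕ) < k * m + r := by
        have := v.isLt
        omega
      exact deg_count hm hbig hr hd hk hvn
  case _ =>
    intro v
    rw [hdeg v]
    split_ifs
    · right; rfl
    · left; rfl
  case _ =>
    have hset : Finset.univ.filter (fun v : Fin n =>
          hyperDeg ((Index m k r d).image (fun p => toFinE n (edg m k r d p))) v = d - 1)
        = toFinE n (Finset.Ico (r * d / k * k) (r * d)) := by
      ext v
      simp only [Finset.mem_filter, Finset.mem_univ, true_and, mem_toFinE, Finset.mem_Ico]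
      rw [hdeg v]
      split_ifs with h
      · exact ⟨fun _ => h, fun _ => rfl⟩
      · constructor
        · intro he
          omega
        · intro hc
          exact (h hc).elim
    rw [hset, card_toFinE ?bnd]
    case bnd =>
      intro w hw
      rw [Finset.mem_Ico] at hw
      omega
    rw [Nat.card_Ico]
    have h1 := Nat.mod_add_div (r * d) k
    have h2 : k * (r * d / k) = (r * d / k) * k := Nat.mul_comm _ _
    have h3 : r * d % k < k := Nat.mod_lt _ hk0
    omega
  case _ =>
    intro e he f hf hne
    rw [Finset.mem_image] at he hf
    obtain ⟨p, hp, rfl⟩ := he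
    obtain ⟨p', hp', rfl⟩ := hf
    have hpp : p ≠ p' := by
      rintro rfl
      exact hne rfl
    have h1 := inter_card_le_one hm hbig hr hd hk0 p hp p' hp' hpp
    calc (toFinE n (edg m k r d p) ∩ toFinE n (edg m k r d p')).card
        = (toFinE n (edg m k r d p ∩ edg m k r d p')).card := by rw [toFinE_inter]
    _ ≤ (edg m k r d p ∩ edg m k r d p').card := card_toFinE_le _
    _ ≤ 1 := h1
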